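/- Every gapless increasing tableau V of shape λ is Des(V)-Pieri-filled: for each i, the boxes of V with entries in the i-th block M_i(Des(V)) form a horizontal strip whose labels weakly increase from left to right. -/

import Mathlib

open scoped Classical

/-- The cell `x = (row, column)` (0-indexed, English orientation) lies in the Young diagram
whose `r`-th row has length `lam r`. -/
def InShape (lam : ℕ → ℕ) (x : ℕ × ℕ) : Prop := x.2 < lam x.1

/-- `lam : ℕ → ℕ` is the row-length function of a partition: weakly decreasing and
eventually zero. -/
def IsPartitionFn (lam : ℕ → ℕ) : Prop := Antitone lam ∧ ∃ N, ∀ n, N ≤ n → lam n = 0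

/-- A genomic tableau of shape `lam`: a semistandard filling (positive entries, rows weakly
increasing left-to-right, columns strictly increasing top-to-bottom) together with, for each
`i`, a partition of the boxes labeled `i` into genes, encoded by the relation `sameGene`.
Boxes in a common gene share their entry; if a gene has boxes (necessarily with a common
entry) in columns `c₁ < c₃`, then every box with the same entry in an intervening column
belongs to the same gene; and no gene has two boxes in a common row.  Entries and the
relation are normalized (to `0`, resp. `False`) outside the shape so that equality of
structures agrees with equality of tableaux. -/
structure GenomicTableau (lam : ℕ → ℕ) where
  entry : ℕ × ℕ → ℕ
  sameGene : ℕ × ℕ → ℕ × ℕ → Prop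
  entry_pos : ∀ x, InShape lam x → 0 < entry x
  entry_zero : ∀ x, ¬ InShape lam x → entry x = 0
  row_weak : ∀ r c₁ c₂, c₁ ≤ c₂ → InShape lam (r, c₂) → entry (r, c₁) ≤ entry (r, c₂)
  col_strict : ∀ r₁ r₂ c, r₁ < r₂ → InShape lam (r₂, c) → entry (r₁, c) < entry (r₂, c)
  sameGene_mem : ∀ x y, sameGene x y → InShape lam x ∧ InShape lam y
  sameGene_refl : ∀ x, InShape lam x → sameGene x x
  sameGene_symm : ∀ x y, sameGene x y → sameGene y x
  sameGene_trans : ∀ x y z, sameGene x y → sameGene y z → sameGene x z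
  sameGene_entry : ∀ x y, sameGene x y → entry x = entry y
  sameGene_interval : ∀ x y z, sameGene x z → InShape lam y → entry y = entry x →
    x.2 < y.2 → y.2 < z.2 → sameGene x y
  sameGene_row : ∀ x y, sameGene x y → x.1 = y.1 → x = y

/-- `x` is the leftmost box of its gene in the genomic tableau `T`. -/
def IsGeneLeader {lam : ℕ → ℕ} (T : GenomicTableau lam) (x : ℕ × ℕ) : Prop :=
  InShape lam x ∧ ∀ y, T.sameGene x y → x.2 ≤ y.2

/-- The number of `(n+1)`-genes of `T` (counted via their leftmost boxes).  Thus `wt T` is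
the weight of `T` as a weak composition indexed from `0`: the variable `x_n` records
`(n+1)`-genes. -/
noncomputable def wt {lam : ℕ → ℕ} (T : GenomicTableau lam) (n : ℕ) : ℕ :=
  {x | IsGeneLeader T x ∧ T.entry x = n + 1}.ncard

/-- The largest entry of the genomic tableau `T`. -/
noncomputable def maxEntry {lam : ℕ → ℕ} (T : GenomicTableau lam) : ℕ :=
  sSup {n | ∃ x, InShape lam x ∧ T.entry x = n}

/-- The positive part of the weight of `T`: the list of nonzero components of `wt T`,
in order. -/
noncomputable def wtPos {lam : ℕ → ℕ} (T : GenomicTableau lam) : List ℕ :=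
  ((List.range (maxEntry T)).map (wt T)).filter (fun e => decide (0 < e))

/-- The (strong) composition `β` refines `α` if `α` is obtained from `β` by summing
consecutive blocks. -/
def Refines (β α : List ℕ) : Prop :=
  ∃ L : List (List ℕ), L.flatten = β ∧ L.map List.sum = α

/-- The positive part of a weak composition `m`: the list of its nonzero values in order of
the index. -/
noncomputable def posPart (m : ℕ →₀ ℕ) : List ℕ :=
  (m.support.sort (· ≤ ·)).map (fun i => m i)

/-- The fundamental quasisymmetric function `F_α`, a power series in variables indexed
by `ℕ`: the sum of `x^m` over all weak compositions `m` whose positive part refines `α`. -/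
noncomputable def fundamentalF (α : List ℕ) : MvPowerSeries ℕ ℤ :=
  fun m : ℕ →₀ ℕ => if Refines (posPart m) α then 1 else 0

/-- The genomic Schur function `U_lam`: the coefficient of `x^m` is the number of genomic
tableaux of shape `lam` with weight `m`. -/
noncomputable def genomicSchur (lam : ℕ → ℕ) : MvPowerSeries ℕ ℤ :=
  fun m : ℕ →₀ ℕ => (Nat.card {T : GenomicTableau lam // ∀ n, wt T n = m n} : ℤ)

/-- A genomic tableau is quasiYamanouchi if for every `i > 1` appearing in it, some
instance of `i` is weakly west of some instance of `i-1`. -/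
def IsQY {lam : ℕ → ℕ} (T : GenomicTableau lam) : Prop :=
  ∀ i, 2 ≤ i → (∃ x, InShape lam x ∧ T.entry x = i) →
    ∃ x y, InShape lam x ∧ InShape lam y ∧
      T.entry x = i ∧ T.entry y = i - 1 ∧ x.2 ≤ y.2

/-- One step of the regularization algorithm: if `i ≥ 2` appears in `T` and every box
labeled `i` is strictly east of every box labeled `i-1`, replace every label `i` by `i-1`,
keeping the gene decomposition. -/
def RegStep {lam : ℕ → ℕ} (T T' : GenomicTableau lam) : Prop :=
  ∃ i, 2 ≤ i ∧ (∃ x, InShape lam x ∧ T.entry x = i) ∧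
    (∀ x y, InShape lam x → InShape lam y → T.entry x = i → T.entry y = i - 1 → y.2 < x.2) ∧
    (∀ x, T'.entry x = if T.entry x = i then i - 1 else T.entry x) ∧
    (∀ x y, T'.sameGene x y ↔ T.sameGene x y)

/-- An increasing tableau of shape `lam`: positive entries, strictly increasing along rows
and down columns, normalized to `0` outside the shape. -/
structure IncreasingTableau (lam : ℕ → ℕ) where
  entry : ℕ × ℕ → ℕ
  entry_pos : ∀ x, InShape lam x → 0 < entry x
  entry_zero : ∀ x, ¬ InShape lam x → entry x = 0
  row_strict : ∀ r c₁ c₂, c₁ < c₂ → InShape lam (r, c₂) → entry (r, c₁) < entry (r, c₂)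
  col_strict : ∀ r₁ r₂ c, r₁ < r₂ → InShape lam (r₂, c) → entry (r₁, c) < entry (r₂, c)

/-- The largest entry of the increasing tableau `T`. -/
noncomputable def maxEntryInc {lam : ℕ → ℕ} (T : IncreasingTableau lam) : ℕ :=
  sSup {n | ∃ x, InShape lam x ∧ T.entry x = n}

/-- An increasing tableau is gapless if its set of entries is `{1, …, n}` for some `n`. -/
def Gapless {lam : ℕ → ℕ} (T : IncreasingTableau lam) : Prop :=
  ∀ i, 0 < i → i ≤ maxEntryInc T → ∃ x, InShape lam x ∧ T.entry x = i

/-- `i` is a descent of the increasing tableau `T` if some instance of `i` lies in a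
strictly higher row than some instance of `i+1`. -/
def IsDescent {lam : ℕ → ℕ} (T : IncreasingTableau lam) (i : ℕ) : Prop :=
  ∃ x y, InShape lam x ∧ InShape lam y ∧ T.entry x = i ∧ T.entry y = i + 1 ∧ x.1 < y.1

/-- The descent composition of a gapless increasing tableau with entries `{1, …, n}`:
the lengths of the segments of the word `1 2 ⋯ n` cut after each descent. -/
noncomputable def descComp {lam : ℕ → ℕ} (T : IncreasingTableau lam) : List ℕ :=
  let n := maxEntryInc T
  let ds := (((Finset.range n).filter fun i => IsDescent T i).sort (· ≤ ·)) ++ [n]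
  (ds.zip (0 :: ds)).map fun p => p.1 - p.2

/-- A standard Young tableau, viewed as an increasing tableau: gapless with all entries
distinct (so the entries are `1, …, |lam|`, each exactly once). -/
def IsStandard {lam : ℕ → ℕ} (T : IncreasingTableau lam) : Prop :=
  Gapless T ∧ ∀ x y, InShape lam x → InShape lam y → T.entry x = T.entry y → x = y

/-- The column of the leftmost box of the gene of `x` in `T`. -/
noncomputable def leadCol {lam : ℕ → ℕ} (T : GenomicTableau lam) (x : ℕ × ℕ) : ℕ :=
  sInf {c | ∃ y, T.sameGene x y ∧ y.2 = c}

/-- K-standardization `Φ`: order the genes of `T` by listing the `1`-genes left to right,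
then the `2`-genes left to right, and so on; `kStd T x` is the (1-based) position of the
gene of `x` in this order (and `0` outside the shape). -/
noncomputable def kStd {lam : ℕ → ℕ} (T : GenomicTableau lam) (x : ℕ × ℕ) : ℕ :=
  if InShape lam x then
    {y | IsGeneLeader T y ∧ (T.entry y < T.entry x ∨
        (T.entry y = T.entry x ∧ y.2 ≤ leadCol T x))}.ncard
  else 0

/-- A semistandard tableau of shape `lam`, with positive entries, normalized to `0`
outside the shape. -/
structure SemistandardTableau (lam : ℕ → ℕ) where
  entry : ℕ × ℕ → ℕ
  entry_pos : ∀ x, InShape lam x → 0 < entry x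
  entry_zero : ∀ x, ¬ InShape lam x → entry x = 0
  row_weak : ∀ r c₁ c₂, c₁ ≤ c₂ → InShape lam (r, c₂) → entry (r, c₁) ≤ entry (r, c₂)
  col_strict : ∀ r₁ r₂ c, r₁ < r₂ → InShape lam (r₂, c) → entry (r₁, c) < entry (r₂, c)

/-- The number of boxes of `T` with entry `n+1` (matching the variable convention of
`wt`: the variable `x_n` records the entry `n+1`). -/
noncomputable def contentOf {lam : ℕ → ℕ} (T : SemistandardTableau lam) (n : ℕ) : ℕ :=
  {x | InShape lam x ∧ T.entry x = n + 1}.ncard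

/-- The Schur function `s_mu` as the generating function of semistandard tableaux of
shape `mu` by content. -/
noncomputable def schurFn (mu : ℕ → ℕ) : MvPowerSeries ℕ ℤ :=
  fun m : ℕ →₀ ℕ => (Nat.card {T : SemistandardTableau mu // ∀ n, contentOf T n = m n} : ℤ)

/-- The row-length function of the flag-shaped partition `(a, b, 1^k)`. -/
def flagShape (a b k : ℕ) : ℕ → ℕ :=
  fun r => if r = 0 then a else if r = 1 then b else if r < k + 2 then 1 else 0

/-- The homogeneous component of degree `d` of a power series. -/
noncomputable def homComponent (d : ℕ) (f : MvPowerSeries ℕ ℤ) : MvPowerSeries ℕ ℤ :=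
  fun m : ℕ →₀ ℕ => if (m.sum fun _ e => e) = d then MvPowerSeries.coeff m f else 0

/-- The complete homogeneous symmetric function `h_k` (`h_0 = 1`, and `h_k = 0` for
`k < 0`): the sum of all monomials of total degree `k`. -/
noncomputable def hSeries (k : ℤ) : MvPowerSeries ℕ ℤ :=
  fun m : ℕ →₀ ℕ => if ((m.sum fun _ e => e : ℕ) : ℤ) = k then 1 else 0

/-- The Schur function of an arbitrary (strong) composition `α`, via the Jacobi–Trudi
determinant `s_α = det(h_{α_i - i + j})`. -/
noncomputable def schurComp (α : List ℕ) : MvPowerSeries ℕ ℤ :=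
  Matrix.det (Matrix.of fun i j : Fin α.length =>
    hSeries ((α.get i : ℤ) - (i : ℕ) + (j : ℕ)))

/-- `e` lies in the `i`-th block (0-indexed) `M_{i+1}(α) = {α_1 + ⋯ + α_i + 1, …,
α_1 + ⋯ + α_{i+1}}` of the composition `α`. -/
def InBlock (α : List ℕ) (i : ℕ) (e : ℕ) : Prop :=
  (α.take i).sum < e ∧ e ≤ (α.take (i + 1)).sum

/-- The positive part of a weak composition of length `n`. -/
noncomputable def posPartFin {n : ℕ} (m : Fin n →₀ ℕ) : List ℕ :=
  (List.ofFn fun k : Fin n => m k).filter (fun e => decide (0 < e))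

/-- The fundamental quasisymmetric polynomial `F_α(x_1, …, x_n)` in `n` variables. -/
noncomputable def fundamentalFFin (n : ℕ) (α : List ℕ) : MvPowerSeries (Fin n) ℤ :=
  fun m : Fin n →₀ ℕ => if Refines (posPartFin m) α then 1 else 0

/-- The genomic Schur polynomial `U_lam(x_1, …, x_n)`: the generating function of genomic
tableaux with all entries at most `n`, by weight. -/
noncomputable def genomicSchurPoly (lam : ℕ → ℕ) (n : ℕ) : MvPowerSeries (Fin n) ℤ :=
  fun m : Fin n →₀ ℕ =>
    (Nat.card {T : GenomicTableau lam //
      (∀ x, InShape lam x → T.entry x ≤ n) ∧ ∀ k : Fin n, wt T (k : ℕ) = m k} : ℤ)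


private lemma aux_sum_tel (l : List ℕ) (a : ℕ) (h : List.Chain (· ≤ ·) a l) :
    a + ((l.zip (a :: l)).map (fun p => p.1 - p.2)).sum = l.getLastD a := by
  induction l generalizing a with
  | nil => simp
  | cons b t ih =>
    rcases List.chain_cons.mp h with ⟨hab, hc⟩
    have := ih b hc
    rw [List.getLastD_cons]
    simp only [List.zip_cons_cons, List.map_cons, List.sum_cons]
    omega

private lemma aux_partial (l : List ℕ) (a : ℕ) (h : List.Chain (· ≤ ·) a l)
    (d : ℕ) (hd : d ∈ l) :
    ∃ j, a + ((((l.zip (a :: l)).map (fun p => p.1 - p.2)).take j)).sum = d := by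
  induction l generalizing a with
  | nil => cases hd
  | cons b t ih =>
    rcases List.chain_cons.mp h with ⟨hab, hc⟩
    rcases List.mem_cons.mp hd with rfl | hd
    · exact ⟨1, by simp; omega⟩
    · obtain ⟨j, hj⟩ := ih b hc hd
      refine ⟨j + 1, ?_⟩
      simp only [List.zip_cons_cons, List.map_cons, List.take_succ_cons, List.sum_cons]
      omega

private lemma aux_take_sum_le (L : List ℕ) (k : ℕ) : (L.take k).sum ≤ L.sum := by
  conv_rhs => rw [← List.take_append_drop k L]
  rw [List.sum_append]; omega

private lemma aux_take_mono (L : List ℕ) {k i : ℕ} (h : k ≤ i) :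
    (L.take k).sum ≤ (L.take i).sum := by
  have : L.take k = (L.take i).take k := by
    rw [List.take_take, min_eq_left h]
  rw [this]; exact aux_take_sum_le _ _
private lemma step_col {lam : ℕ → ℕ} (hlam : IsPartitionFn lam)
    (V : IncreasingTableau lam) {j : ℕ} (hnd : ¬ IsDescent V j)
    {x y : ℕ × ℕ} (hx : InShape lam x) (hy : InShape lam y)
    (hex : V.entry x = j) (hey : V.entry y = j + 1) : x.2 < y.2 := by
  by_contra hcol
  push_neg at hcol
  have hr : y.1 ≤ x.1 := by
    by_contra hr; push_neg at hr
    exact hnd ⟨x, y, hx, hy, hex, hey, hr⟩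
  have hz : InShape lam (y.1, x.2) := lt_of_lt_of_le hx (hlam.1 hr)
  have hxe : x = (x.1, x.2) := rfl
  have hye : y = (y.1, y.2) := rfl
  have h1 : V.entry y ≤ V.entry (y.1, x.2) := by
    rcases lt_or_eq_of_le hcol with hlt | heq
    · exact le_of_lt (by rw [hye]; exact V.row_strict y.1 y.2 x.2 hlt hz)
    · rw [hye, heq]
  have h2 : V.entry (y.1, x.2) ≤ V.entry x := by
    rcases lt_or_eq_of_le hr with hlt | heq
    · exact le_of_lt (by rw [hxe]; exact V.col_strict y.1 x.1 x.2 hlt hx)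
    · rw [hxe, heq]
  omega

private lemma chain_col {lam : ℕ → ℕ} (hlam : IsPartitionFn lam)
    (V : IncreasingTableau lam) (hV : Gapless V) :
    ∀ k e1 (x y : ℕ × ℕ), InShape lam x → InShape lam y →
      V.entry x = e1 → V.entry y = e1 + k + 1 →
      e1 + k + 1 ≤ maxEntryInc V →
      (∀ j, e1 ≤ j → j < e1 + k + 1 → ¬ IsDescent V j) → x.2 < y.2 := by
  intro k
  induction k with
  | zero =>
    intro e1 x y hx hy hex hey _ hnd
    exact step_col hlam V (hnd e1 le_rfl (by omega)) hx hy hex hey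
  | succ k ih =>
    intro e1 x y hx hy hex hey hle hnd
    obtain ⟨z, hz, hze⟩ := hV (e1 + 1) (by omega) (by omega)
    have h1 : x.2 < z.2 :=
      step_col hlam V (hnd e1 le_rfl (by omega)) hx hz hex hze
    have h2 : z.2 < y.2 := by
      refine ih (e1 + 1) z y hz hy hze (by omega) (by omega) ?_
      intro j hj1 hj2; exact hnd j (by omega) (by omega)
    omega

/-- **Lemma.** Every gapless increasing tableau `V` of shape `λ` is `Des(V)`-Pieri-filled:
for each `i`, the boxes of `V` with entries in the `i`-th block `M_i(Des(V))` form a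
horizontal strip (at most one box in any column) whose labels weakly increase from left to
right. -/
theorem gaplessInc_pieriFilled (lam : ℕ → ℕ) (hlam : IsPartitionFn lam)
    (V : IncreasingTableau lam) (hV : Gapless V) (i : ℕ) :
    (∀ x y, InShape lam x → InShape lam y →
      InBlock (descComp V) i (V.entry x) → InBlock (descComp V) i (V.entry y) →
      x.2 = y.2 → x = y) ∧
    (∀ x y, InShape lam x → InShape lam y →
      InBlock (descComp V) i (V.entry x) → InBlock (descComp V) i (V.entry y) →
      x.2 < y.2 → V.entry x ≤ V.entry y) := by
  set n := maxEntryInc V with hn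
  set D := ((Finset.range n).filter fun j => IsDescent V j).sort (· ≤ ·) with hD
  set l := D ++ [n] with hl
  have hLdef : descComp V = (l.zip (0 :: l)).map (fun p => p.1 - p.2) := rfl
  -- chain property
  have hDsorted : List.Pairwise (· ≤ ·) D := Finset.pairwise_sort _ _
  have hDmem : ∀ d ∈ D, d < n := by
    intro d hd
    rw [hD, Finset.mem_sort] at hd
    exact Finset.mem_range.mp (Finset.mem_filter.mp hd).1
  have hchain : List.Chain (· ≤ ·) 0 l := by
    rw [List.Chain, List.isChain_iff_pairwise]
    rw [hl]
    refine List.pairwise_cons.mpr ⟨fun b _ => Nat.zero_le b, ?_⟩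
    refine List.pairwise_append.mpr ⟨hDsorted, List.pairwise_singleton _ _, ?_⟩
    intro a ha b hb
    simp only [List.mem_singleton] at hb
    subst hb
    exact le_of_lt (hDmem a ha)
  -- total sum
  have htot : (descComp V).sum = n := by
    have h0 := aux_sum_tel l 0 hchain
    have hlast : l.getLastD 0 = n := by
      rw [hl]
      simp
    rw [hLdef]
    omega
  -- main monotonicity
  have key : ∀ x y : ℕ × ℕ, InShape lam x → InShape lam y →
      InBlock (descComp V) i (V.entry x) → InBlock (descComp V) i (V.entry y) →
      V.entry x < V.entry y → x.2 < y.2 := by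
    intro x y hx hy hbx hby hlt
    obtain ⟨hbx1, hbx2⟩ := hbx
    obtain ⟨hby1, hby2⟩ := hby
    have hyn : V.entry y ≤ n := le_trans hby2 (by rw [← htot]; exact aux_take_sum_le (descComp V) _)
    have hnd : ∀ j, V.entry x ≤ j → j < V.entry y → ¬ IsDescent V j := by
      intro j hj1 hj2 hdesc
      have hjD : j ∈ l := by
        rw [hl]
        refine List.mem_append.mpr (Or.inl ?_)
        rw [hD, Finset.mem_sort]
        exact Finset.mem_filter.mpr ⟨Finset.mem_range.mpr (by omega), hdesc⟩
      obtain ⟨k, hk⟩ := aux_partial l 0 hchain j hjD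
      rw [← hLdef] at hk
      simp only [Nat.zero_add] at hk
      have hik : i < k := by
        by_contra hik; push_neg at hik
        have := aux_take_mono (descComp V) hik
        omega
      have hki : k < i + 1 := by
        by_contra hki; push_neg at hki
        have := aux_take_mono (descComp V) hki
        omega
      omega
    have hkey := chain_col hlam V hV (V.entry y - V.entry x - 1) (V.entry x) x y hx hy rfl
      (by omega) (by rw [← hn]; omega) (by intro j h1 h2; exact hnd j h1 (by omega))
    exact hkey
  constructor
  · intro x y hx hy hbx hby hcol
    have hee : V.entry x = V.entry y := by
      rcases lt_trichotomy (V.entry x) (V.entry y) with h | h | h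
      · exact absurd (key x y hx hy hbx hby h) (by omega)
      · exact h
      · exact absurd (key y x hy hx hby hbx h) (by omega)
    have hrr : x.1 = y.1 := by
      rcases lt_trichotomy x.1 y.1 with h | h | h
      · have h2 := V.col_strict x.1 y.1 y.2 h hy
        have e1 : ((x.1, y.2) : ℕ × ℕ) = x := by rw [← hcol]
        have e2 : ((y.1, y.2) : ℕ × ℕ) = y := rfl
        rw [e1, e2] at h2
        omega
      · exact h
      · have h2 := V.col_strict y.1 x.1 x.2 h hx
        have e1 : ((y.1, x.2) : ℕ × ℕ) = y := by rw [hcol]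
        have e2 : ((x.1, x.2) : ℕ × ℕ) = x := rfl
        rw [e1, e2] at h2
        omega
    exact Prod.ext hrr hcol
  · intro x y hx hy hbx hby hcol
    by_contra h; push_neg at h
    exact absurd (key y x hy hx hby hbx h) (by omega)
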